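/- Truncated minimum bound: let δ : ℕ → [0,∞) satisfy Σ_{t=T}^∞ δ(t) ≤ C T^{-α} for all T ≥ 1 and some constants C > 0, α > 0, and also Σ_{t=0}^∞ δ(t) < ∞. Define Γ(k) = Σ_{j=0}^∞ δ(j)δ(j+k). Then for every η ∈ (0,1], Σ_{k=0}^∞ min(Γ(k), η) = O(η^{α/(1+α)}) as η → 0; that is, there exists a constant C' with Σ_{k=0}^∞ min(Γ(k), η) ≤ C' η^{α/(1+α)}. -/

import Mathlib

/-- truncated minimum bound for `Γ(k) = Σ_j δ(j)δ(j+k)`. -/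
theorem truncated_min_bound
    (δ : ℕ → ℝ) (hδpos : ∀ t, 0 ≤ δ t) (hδsum : Summable δ)
    (C α : ℝ) (hC : 0 < C) (hα : 0 < α)
    (htail : ∀ T : ℕ, 1 ≤ T → ∑' t : ℕ, δ (t + T) ≤ C * (T:ℝ) ^ (-α))
    (Γ : ℕ → ℝ) (hΓ : ∀ k, Γ k = ∑' j : ℕ, δ j * δ (j + k)) :
    ∃ C' > 0, ∀ η : ℝ, 0 < η → η ≤ 1 →
      ∑' k : ℕ, min (Γ k) η ≤ C' * η ^ (α / (1 + α)) := by
  set S := ∑' t, δ t with hS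
  have hS0 : 0 ≤ S := tsum_nonneg hδpos
  have hshift : ∀ j : ℕ, Summable (fun k => δ (j + k)) := by
    intro j
    simpa [add_comm] using (summable_nat_add_iff j).2 hδsum
  have htailS : ∀ j : ℕ, ∑' k, δ (j + k) ≤ S := by
    intro j
    have h := Summable.sum_add_tsum_nat_add (f := δ) j hδsum
    have h2 : (0:ℝ) ≤ ∑ i ∈ Finset.range j, δ i := Finset.sum_nonneg fun i _ => hδpos i
    have h3 : (∑' k, δ (j + k)) = ∑' k, δ (k + j) := tsum_congr fun k => by rw [add_comm]
    rw [h3]; linarith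
  have hrow : ∀ j : ℕ, Summable (fun k => δ j * δ (j + k)) :=
    fun j => (hshift j).mul_left _
  have hF : Summable (fun p : ℕ × ℕ => δ p.1 * δ (p.1 + p.2)) := by
    rw [summable_prod_of_nonneg (fun p => mul_nonneg (hδpos _) (hδpos _))]
    refine ⟨fun j => hrow j, ?_⟩
    refine Summable.of_nonneg_of_le
      (fun j => tsum_nonneg fun k => mul_nonneg (hδpos j) (hδpos _))
      (fun j => ?_) (hδsum.mul_right S)
    show (∑' k, δ j * δ (j + k)) ≤ δ j * S
    rw [tsum_mul_left]
    exact mul_le_mul_of_nonneg_left (htailS j) (hδpos j)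
  have hΓsum : Summable Γ := by
    have := (hF.prod_symm).prod
    simpa [funext hΓ] using this
  have hΓ0 : ∀ k, 0 ≤ Γ k := fun k => by
    rw [hΓ k]; exact tsum_nonneg fun j => mul_nonneg (hδpos j) (hδpos _)
  -- tail bound for Γ
  have hΓtail : ∀ K : ℕ, 1 ≤ K → ∑' k, Γ (k + K) ≤ S * (C * (K:ℝ) ^ (-α)) := by
    intro K hK1
    have hinj : Function.Injective (fun p : ℕ × ℕ => (p.1, p.2 + K)) := by
      intro p q h
      simp only [Prod.mk.injEq] at h
      exact Prod.ext h.1 (by omega)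
    have hG : Summable (fun p : ℕ × ℕ => δ p.1 * δ (p.1 + (p.2 + K))) := by
      have h := hF.comp_injective hinj
      simpa [Function.comp_def] using h
    have hswap : (∑' k, Γ (k + K)) = ∑' (j) (k), δ j * δ (j + (k + K)) := by
      have h1 : (∑' k, Γ (k + K)) = ∑' (k) (j), δ j * δ (j + (k + K)) :=
        tsum_congr fun k => hΓ (k + K)
      rw [h1]
      exact Summable.tsum_comm (f := fun j k => δ j * δ (j + (k + K))) hG
    rw [hswap]
    have hterm : ∀ j : ℕ, (∑' k, δ j * δ (j + (k + K))) ≤ δ j * (C * (K:ℝ) ^ (-α)) := by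
      intro j
      rw [tsum_mul_left]
      refine mul_le_mul_of_nonneg_left ?_ (hδpos j)
      have h1 : (∑' k, δ (j + (k + K))) = ∑' k, δ (k + (j + K)) :=
        tsum_congr fun k => by ring_nf
      have h2 : (∑' k, δ (k + (j + K))) ≤ C * ((j + K : ℕ) : ℝ) ^ (-α) :=
        htail (j + K) (by omega)
      have h3 : C * ((j + K : ℕ) : ℝ) ^ (-α) ≤ C * (K:ℝ) ^ (-α) := by
        refine mul_le_mul_of_nonneg_left ?_ hC.le
        refine Real.rpow_le_rpow_of_nonpos ?_ ?_ (by linarith)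
        · exact_mod_cast hK1
        · exact_mod_cast Nat.le_add_left K j
      rw [h1]; linarith
    calc (∑' (j) (k), δ j * δ (j + (k + K)))
        ≤ ∑' j, δ j * (C * (K:ℝ) ^ (-α)) := by
          refine Summable.tsum_le_tsum hterm hG.prod ?_
          exact hδsum.mul_right _
      _ = S * (C * (K:ℝ) ^ (-α)) := by rw [tsum_mul_right]
  refine ⟨2 + S * C, by positivity, fun η hη hη1 => ?_⟩
  set e : ℝ := -(1 + α)⁻¹ with he
  have h1α : (0:ℝ) < 1 + α := by linarith
  set x : ℝ := η ^ e with hx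
  have hx0 : 0 < x := Real.rpow_pos_of_pos hη e
  have hx1 : 1 ≤ x :=
    Real.one_le_rpow_of_pos_of_le_one_of_nonpos hη hη1 (by simp [he]; positivity)
  set K : ℕ := ⌈x⌉₊ with hKdef
  have hK1 : 1 ≤ K := Nat.one_le_ceil_iff.2 hx0
  have hxK : x ≤ (K:ℝ) := Nat.le_ceil x
  have hK2x : (K:ℝ) ≤ 2 * x := by
    have := Nat.ceil_lt_add_one hx0.le
    linarith
  have hβ : e + 1 = α / (1 + α) := by
    rw [he]; field_simp; ring
  have hηpow : x * η = η ^ (α / (1 + α)) := by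
    rw [← hβ, Real.rpow_add_one hη.ne']
  have hpow2 : x ^ (-α) = η ^ (α / (1 + α)) := by
    rw [hx, ← Real.rpow_mul hη.le]
    congr 1
    rw [he]; field_simp
  have hmin_sum : Summable (fun k => min (Γ k) η) :=
    Summable.of_nonneg_of_le (fun k => le_min (hΓ0 k) hη.le)
      (fun k => min_le_left _ _) hΓsum
  have hsplit := (Summable.sum_add_tsum_nat_add (f := fun k => min (Γ k) η) K hmin_sum).symm
  have hhead : ∑ i ∈ Finset.range K, min (Γ i) η ≤ (K:ℝ) * η := by
    calc ∑ i ∈ Finset.range K, min (Γ i) η ≤ ∑ i ∈ Finset.range K, η :=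
          Finset.sum_le_sum fun i _ => min_le_right _ _
      _ = (K:ℝ) * η := by simp [mul_comm]
  have htail2 : (∑' k, min (Γ (k + K)) η) ≤ S * (C * (K:ℝ) ^ (-α)) := by
    refine le_trans (Summable.tsum_le_tsum (fun k => min_le_left _ _) ?_ ?_) (hΓtail K hK1)
    · exact (summable_nat_add_iff K).2 hmin_sum
    · exact (summable_nat_add_iff K).2 hΓsum
  have hKa : (K:ℝ) ^ (-α) ≤ η ^ (α / (1 + α)) := by
    rw [← hpow2]
    exact Real.rpow_le_rpow_of_nonpos hx0 hxK (by linarith)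
  have hKη : (K:ℝ) * η ≤ 2 * η ^ (α / (1 + α)) := by
    rw [← hηpow]
    nlinarith
  calc (∑' k, min (Γ k) η)
      = ∑ i ∈ Finset.range K, min (Γ i) η + ∑' k, min (Γ (k + K)) η := hsplit
    _ ≤ (K:ℝ) * η + S * (C * (K:ℝ) ^ (-α)) := by linarith
    _ ≤ 2 * η ^ (α / (1 + α)) + S * (C * η ^ (α / (1 + α))) := by
        have : S * (C * (K:ℝ) ^ (-α)) ≤ S * (C * η ^ (α / (1 + α))) := by
          refine mul_le_mul_of_nonneg_left (mul_le_mul_of_nonneg_left hKa hC.le) hS0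
        linarith
    _ = (2 + S * C) * η ^ (α / (1 + α)) := by ring
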